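/- Let A ∈ ℝ^{m×n}, b ∈ ℝᵐ, c ∈ ℝⁿ, and W ∈ ℝ^{n×n} symmetric positive semidefinite with AᵀA + W positive definite. For every μ > 0 and v ∈ ℝᵐ there exists a unique pair (d, x) ∈ ℝᵐ × ℝⁿ satisfying √μ·Aᵀ(eᵛ + eᵛ∘d) = Wx + c and √μ·(e^{−v} − e^{−v}∘d) = Ax + b. Moreover d = 𝟏 − (1/√μ)·eᵛ∘(Ax + b), and x is the unique solution of (AᵀQ(v)A + W)x = 2√μ·Aᵀeᵛ − (c + AᵀQ(v)b), where Q(v) is the diagonal matrix with entries e^{2vᵢ}. -/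

import Mathlib

open Matrix

/-- Elementwise exponentiation `e^v` of a vector. -/
noncomputable def expV {m : ℕ} (v : Fin m → ℝ) : Fin m → ℝ := fun i => Real.exp (v i)

/-- The log-domain Newton system: `(d, x)` satisfies
`√μ·Aᵀ(eᵛ + eᵛ∘d) = Wx + c` and `√μ·(e^{−v} − e^{−v}∘d) = Ax + b`. -/
noncomputable def IsNewton {m n : ℕ} (A : Matrix (Fin m) (Fin n) ℝ) (b : Fin m → ℝ)
    (c : Fin n → ℝ) (W : Matrix (Fin n) (Fin n) ℝ) (μ : ℝ) (v d : Fin m → ℝ)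
    (x : Fin n → ℝ) : Prop :=
  Real.sqrt μ • (Aᵀ).mulVec (expV v + expV v * d) = W.mulVec x + c ∧
  Real.sqrt μ • (expV (-v) - expV (-v) * d) = A.mulVec x + b

/-- `Q(v)`: the diagonal matrix with entries `e^{2 vᵢ}`. -/
noncomputable def Q {m : ℕ} (v : Fin m → ℝ) : Matrix (Fin m) (Fin m) ℝ :=
  Matrix.diagonal (fun i => Real.exp (2 * v i))

lemma elim_d (s e d r : ℝ) (hs : s ≠ 0) (he : 0 < e) :
    s * (e⁻¹ - e⁻¹ * d) = r ↔ d = 1 - s⁻¹ * (e * r) := by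
  have he' := he.ne'
  field_simp
  constructor <;> intro h <;> nlinarith [h]

lemma inner_id {m : ℕ} (s : ℝ) (hs : s ≠ 0) (v r : Fin m → ℝ) :
    s • (expV v + expV v * (1 - s⁻¹ • (expV v * r))) = (2*s) • expV v - (Q v) *ᵥ r := by
  funext i
  simp only [Pi.smul_apply, Pi.add_apply, Pi.mul_apply, Pi.sub_apply, Pi.one_apply,
    smul_eq_mul, expV, Matrix.sub_apply, mulVec_diagonal, Q]
  rw [two_mul (v i), Real.exp_add]
  field_simp
  ring

lemma newton_iff {m n : ℕ} (A : Matrix (Fin m) (Fin n) ℝ) (b : Fin m → ℝ) (c : Fin n → ℝ)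
    (W : Matrix (Fin n) (Fin n) ℝ) (μ : ℝ) (hμ : 0 < μ) (v d : Fin m → ℝ) (x : Fin n → ℝ) :
    IsNewton A b c W μ v d x ↔
      (d = 1 - (Real.sqrt μ)⁻¹ • (expV v * (A.mulVec x + b)) ∧
       (Aᵀ * Q v * A + W).mulVec x
         = (2 * Real.sqrt μ) • (Aᵀ).mulVec (expV v) - (c + (Aᵀ * Q v).mulVec b)) := by
  set s := Real.sqrt μ with hsdef
  have hs : (0:ℝ) < s := Real.sqrt_pos.2 hμ
  have hs' : s ≠ 0 := hs.ne'
  have h2 : (s • (expV (-v) - expV (-v) * d) = A.mulVec x + b) ↔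
      d = 1 - s⁻¹ • (expV v * (A.mulVec x + b)) := by
    rw [funext_iff, funext_iff]
    apply forall_congr'
    intro i
    simp only [Pi.smul_apply, Pi.sub_apply, Pi.mul_apply, Pi.add_apply, Pi.one_apply,
      smul_eq_mul, expV, Pi.neg_apply, Real.exp_neg]
    exact elim_d s _ (d i) _ hs' (Real.exp_pos _)
  constructor
  · rintro ⟨h1, h2'⟩
    have hd := h2.1 h2'
    refine ⟨hd, ?_⟩
    rw [hd] at h1
    rw [← mulVec_smul, inner_id s hs' v _, mulVec_sub, mulVec_smul, mulVec_mulVec,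
      mulVec_add, mulVec_mulVec] at h1
    rw [add_mulVec]
    linear_combination -h1
  · rintro ⟨hd, hx⟩
    refine ⟨?_, h2.2 hd⟩
    rw [hd]
    rw [← mulVec_smul, inner_id s hs' v _, mulVec_sub, mulVec_smul, mulVec_mulVec,
      mulVec_add, mulVec_mulVec]
    rw [add_mulVec] at hx
    linear_combination -hx

lemma quadform {m n : ℕ} (A : Matrix (Fin m) (Fin n) ℝ) (B : Matrix (Fin m) (Fin m) ℝ)
    (W : Matrix (Fin n) (Fin n) ℝ) (x : Fin n → ℝ) :
    x ⬝ᵥ (Aᵀ * B * A + W) *ᵥ x = (A *ᵥ x) ⬝ᵥ B *ᵥ (A *ᵥ x) + x ⬝ᵥ W *ᵥ x := by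
  rw [add_mulVec, dotProduct_add]
  congr 1
  rw [← mulVec_mulVec, ← mulVec_mulVec, dotProduct_mulVec, vecMul_transpose]

lemma M_posDef {m n : ℕ} (A : Matrix (Fin m) (Fin n) ℝ) (W : Matrix (Fin n) (Fin n) ℝ)
    (hW : W.PosSemidef) (hAW : (Aᵀ * A + W).PosDef) (v : Fin m → ℝ) :
    (Aᵀ * Q v * A + W).PosDef := by
  have hQ : (Q v).PosDef := posDef_diagonal_iff.2 fun i => Real.exp_pos _
  have hAT : Aᵀ = Aᴴ := by
    ext i j; simp [conjTranspose_apply]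
  rw [posDef_iff_dotProduct_mulVec]
  constructor
  · exact Matrix.IsHermitian.add (by rw [hAT]; exact isHermitian_conjTranspose_mul_mul A hQ.1) hW.1
  · intro x hx
    have hq := quadform A (Q v) W x
    have hq1 : x ⬝ᵥ (Aᵀ * (1 : Matrix (Fin m) (Fin m) ℝ) * A + W) *ᵥ x = (A *ᵥ x) ⬝ᵥ (A *ᵥ x) + x ⬝ᵥ W *ᵥ x := by
      simpa using quadform A (1 : Matrix (Fin m) (Fin m) ℝ) W x
    have hWx : 0 ≤ x ⬝ᵥ W *ᵥ x := by simpa using hW.dotProduct_mulVec_nonneg x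
    simp only [star_trivial]
    rw [hq]
    rcases eq_or_ne (A *ᵥ x) 0 with hy | hy
    · have hpos : 0 < x ⬝ᵥ (Aᵀ * A + W) *ᵥ x := by simpa using hAW.dotProduct_mulVec_pos hx
      rw [show Aᵀ * A = Aᵀ * (1 : Matrix (Fin m) (Fin m) ℝ) * A by rw [Matrix.mul_one]] at hpos
      rw [hq1, hy] at hpos
      simpa [hy] using hpos
    · have hQy : 0 < (A *ᵥ x) ⬝ᵥ (Q v) *ᵥ (A *ᵥ x) := by simpa using hQ.dotProduct_mulVec_pos hy
      linarith

/-- existence and uniqueness of the Newton direction and point, together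
with the explicit formulas `d = 𝟏 − (1/√μ)·eᵛ∘(Ax+b)` and
`(AᵀQ(v)A + W)x = 2√μ·Aᵀeᵛ − (c + AᵀQ(v)b)` (with `x` its unique solution). -/
theorem stmt_1 {m n : ℕ} (A : Matrix (Fin m) (Fin n) ℝ) (b : Fin m → ℝ) (c : Fin n → ℝ)
    (W : Matrix (Fin n) (Fin n) ℝ) (hW : W.PosSemidef) (hAW : (Aᵀ * A + W).PosDef)
    (μ : ℝ) (hμ : 0 < μ) (v : Fin m → ℝ) :
    (∃! p : (Fin m → ℝ) × (Fin n → ℝ), IsNewton A b c W μ v p.1 p.2) ∧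
    ∀ d : Fin m → ℝ, ∀ x : Fin n → ℝ, IsNewton A b c W μ v d x →
      d = 1 - (Real.sqrt μ)⁻¹ • (expV v * (A.mulVec x + b)) ∧
      (Aᵀ * Q v * A + W).mulVec x
        = (2 * Real.sqrt μ) • (Aᵀ).mulVec (expV v) - (c + (Aᵀ * Q v).mulVec b) ∧
      ∀ x' : Fin n → ℝ,
        (Aᵀ * Q v * A + W).mulVec x'
          = (2 * Real.sqrt μ) • (Aᵀ).mulVec (expV v) - (c + (Aᵀ * Q v).mulVec b) →
        x' = x := by
  set M := Aᵀ * Q v * A + W with hM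
  have hMpd : M.PosDef := M_posDef A W hW hAW v
  have hdet : IsUnit M.det := (Matrix.isUnit_iff_isUnit_det M).1 hMpd.isUnit
  haveI := M.invertibleOfIsUnitDet hdet
  have hinj : Function.Injective M.mulVec := mulVec_injective_of_invertible M
  set rhs := (2 * Real.sqrt μ) • (Aᵀ).mulVec (expV v) - (c + (Aᵀ * Q v).mulVec b) with hrhs
  set x0 := M⁻¹ *ᵥ rhs with hx0def
  have hx0 : M *ᵥ x0 = rhs := by
    rw [hx0def, mulVec_mulVec, mul_nonsing_inv _ hdet, one_mulVec]
  constructor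
  · refine ⟨(1 - (Real.sqrt μ)⁻¹ • (expV v * (A.mulVec x0 + b)), x0), ?_, ?_⟩
    · exact (newton_iff A b c W μ hμ v _ _).2 ⟨rfl, hx0⟩
    · rintro ⟨d, x⟩ h
      rw [newton_iff A b c W μ hμ v] at h
      obtain ⟨hd, hx⟩ := h
      have hxx : x = x0 := hinj (hx.trans hx0.symm)
      subst hxx
      exact Prod.ext hd rfl
  · intro d x h
    rw [newton_iff A b c W μ hμ v] at h
    exact ⟨h.1, h.2, fun x' hx' => hinj (hx'.trans h.2.symm)⟩
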